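/- There does not exist a non-geodesic Legendre curve γ of osculating order 2 in a contact metric manifold whose mean curvature vector field H is C-parallel, i.e., satisfies ∇_T H = λξ for a nowhere-zero function λ along γ. -/
import Mathlib


open Real RealInnerProductSpace

theorem stmt_5
    {E : Type*} [NormedAddCommGroup E] [InnerProductSpace ℝ E]
    (D : (ℝ → E) → (ℝ → E))
    (hDadd : ∀ V W : ℝ → E, ContDiff ℝ (⊤ : ℕ∞) V → ContDiff ℝ (⊤ : ℕ∞) W →
      D (fun s => V s + W s) = fun s => D V s + D W s)
    (hDsmul : ∀ (f : ℝ → ℝ) (V : ℝ → E), ContDiff ℝ (⊤ : ℕ∞) f → ContDiff ℝ (⊤ : ℕ∞) V →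
      D (fun s => f s • V s) = fun s => deriv f s • V s + f s • D V s)
    (hDmetric : ∀ V W : ℝ → E, ContDiff ℝ (⊤ : ℕ∞) V → ContDiff ℝ (⊤ : ℕ∞) W → ∀ s : ℝ,
      deriv (fun t => ⟪V t, W t⟫) s = ⟪D V s, W s⟫ + ⟪V s, D W s⟫)
    (hDsmooth : ∀ V : ℝ → E, ContDiff ℝ (⊤ : ℕ∞) V → ContDiff ℝ (⊤ : ℕ∞) (D V))
    (T v2 : ℝ → E) (k1 : ℝ → ℝ)
    (hTs : ContDiff ℝ (⊤ : ℕ∞) T) (hv2s : ContDiff ℝ (⊤ : ℕ∞) v2) (hk1s : ContDiff ℝ (⊤ : ℕ∞) k1)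
    (hTT : ∀ s : ℝ, ⟪T s, T s⟫ = 1) (hv2v2 : ∀ s : ℝ, ⟪v2 s, v2 s⟫ = 1)
    (hTv2 : ∀ s : ℝ, ⟪T s, v2 s⟫ = 0)
    (hk1pos : ∀ s : ℝ, 0 < k1 s)
    (hF1 : D T = fun s => k1 s • v2 s)
    (hF2 : D v2 = fun s => -(k1 s) • T s)
    (ξ : ℝ → E) (φ A : ℝ → E →ₗ[ℝ] E)
    (hξs : ContDiff ℝ (⊤ : ℕ∞) ξ)
    (hξu : ∀ s : ℝ, ⟪ξ s, ξ s⟫ = 1)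
    (hφa : ∀ (s : ℝ) (v w : E), ⟪φ s v, w⟫ = -⟪v, φ s w⟫)
    (hDξ : D ξ = fun s => -(φ s (T s)) - φ s (A s (T s)))
    (hLeg : ∀ s : ℝ, ⟪T s, ξ s⟫ = 0)
    (lam : ℝ → ℝ) (hlam : ∀ s : ℝ, lam s ≠ 0)
    (hC : ∀ s : ℝ, D (D T) s = lam s • ξ s)
    :
    False := by
  have h := hC 0
  rw [hF1, hDsmul k1 v2 hk1s hv2s, hF2] at h
  have h2 := congrArg (fun x => ⟪x, T 0⟫) h
  simp only [inner_add_left, real_inner_smul_left, real_inner_comm (v2 0) (T 0),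
    real_inner_comm (ξ 0) (T 0), hTT, hTv2, hLeg, mul_zero, mul_one, zero_add,
    add_zero, neg_smul, inner_neg_left, mul_neg] at h2
  have h3 : ⟪v2 0, T 0⟫ = (0:ℝ) := by rw [real_inner_comm]; exact hTv2 0
  have h4 : ⟪ξ 0, T 0⟫ = (0:ℝ) := by rw [real_inner_comm]; exact hLeg 0
  rw [h3, h4] at h2
  have := hk1pos 0
  nlinarith
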